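/- Selection lemma: let u : X → ℝ be bounded Borel and fix δ, ε > 0. There exist Borel measurable maps σ_sup, σ_inf : Ω → X such that σ_sup(x), σ_inf(x) ∈ B_ε(x) for all x ∈ Ω, u(σ_sup(x)) ≥ sup_{B_ε(x)} u − δ, and u(σ_inf(x)) ≤ inf_{B_ε(x)} u + δ. -/

import Mathlib

open Metric MeasureTheory

lemma sup_select {N : ℕ} (δ ε M : ℝ) (hδ : 0 < δ) (hε : 0 < ε)
    (u : EuclideanSpace ℝ (Fin N) → ℝ) (hum : Measurable u)
    (hub : ∀ x, |u x| ≤ M) :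
    ∃ σ : EuclideanSpace ℝ (Fin N) → EuclideanSpace ℝ (Fin N),
      Measurable σ ∧ ∀ x, σ x ∈ ball x ε ∧ sSup (u '' ball x ε) ≤ u (σ x) + δ := by
  classical
  let d : ℕ → (EuclideanSpace ℝ (Fin N)) := TopologicalSpace.denseSeq (EuclideanSpace ℝ (Fin N))
  have hd : DenseRange d := TopologicalSpace.denseRange_denseSeq (EuclideanSpace ℝ (Fin N))
  let ρ : ℕ → ℝ := fun m => 1 / (2 * ((m : ℝ) + 1))
  have hρpos : ∀ m : ℕ, 0 < ρ m := by intro m; positivity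
  have h2ρ : ∀ m : ℕ, 2 * ρ m = 1 / ((m : ℝ) + 1) := by
    intro m
    have : ((m : ℝ) + 1) ≠ 0 := by positivity
    simp only [ρ]
    field_simp
  let Ek : ℤ → Set (EuclideanSpace ℝ (Fin N)) := fun k => u ⁻¹' Set.Ico ((k : ℝ) * δ) (((k : ℝ) + 1) * δ)
  have hmemEk : ∀ z : (EuclideanSpace ℝ (Fin N)), z ∈ Ek ⌊u z / δ⌋ := by
    intro z
    constructor
    · exact (le_div_iff₀ hδ).mp (Int.floor_le _)
    · exact (div_lt_iff₀ hδ).mp (Int.lt_floor_add_one _)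
  let T : ℤ × ℕ × ℕ → Set (EuclideanSpace ℝ (Fin N)) := fun i => Ek i.1 ∩ closedBall (d i.2.2) (ρ i.2.1)
  let ypt : ℤ × ℕ × ℕ → (EuclideanSpace ℝ (Fin N)) := fun i => if h : (T i).Nonempty then h.choose else 0
  have hypt : ∀ i, (T i).Nonempty → ypt i ∈ T i := by
    intro i h
    simp only [ypt, dif_pos h]
    exact h.choose_spec
  let Bad : ℤ → Set (EuclideanSpace ℝ (Fin N)) := fun k => ⋃ k' ∈ Set.Ioi k, ⋃ y ∈ Ek k', ball y ε
  let S : ℤ × ℕ × ℕ → Set (EuclideanSpace ℝ (Fin N)) := fun i => (⋃ y ∈ T i, ball y (ε - 2 * ρ i.2.1)) \ Bad i.1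
  have hSmeas : ∀ i, MeasurableSet (S i) := by
    intro i
    refine MeasurableSet.diff ?_ ?_
    · exact (isOpen_biUnion fun y _ => isOpen_ball).measurableSet
    · exact (isOpen_biUnion fun k' _ =>
        isOpen_biUnion fun y _ => isOpen_ball).measurableSet
  -- coverage
  have hcovι : ∀ x : (EuclideanSpace ℝ (Fin N)), ∃ i, x ∈ S i := by
    intro x
    have hbdd : ∃ b : ℤ, ∀ k : ℤ, ((ball x ε) ∩ Ek k).Nonempty → k ≤ b := by
      refine ⟨⌈M / δ⌉, fun k hk => ?_⟩
      obtain ⟨z, _, hzk⟩ := hk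
      have h1 : (k : ℝ) * δ ≤ u z := hzk.1
      have h2 : u z ≤ M := (abs_le.mp (hub z)).2
      have h3 : (k : ℝ) ≤ M / δ := (le_div_iff₀ hδ).mpr (h1.trans h2)
      exact_mod_cast h3.trans (Int.le_ceil _)
    obtain ⟨k, hk, hkmax⟩ := Int.exists_greatest_of_bdd hbdd
      ⟨⌊u x / δ⌋, ⟨x, mem_ball_self hε, hmemEk x⟩⟩
    obtain ⟨z, hzball, hzEk⟩ := hk
    have hdxz : dist x z < ε := by rw [dist_comm]; exact mem_ball.mp hzball
    obtain ⟨m, hm⟩ := exists_nat_one_div_lt (show (0:ℝ) < ε - dist x z by linarith)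
    obtain ⟨j, hj⟩ := Metric.denseRange_iff.mp hd z (ρ m) (hρpos m)
    refine ⟨(k, m, j), ?_, ?_⟩
    · simp only [Set.mem_iUnion]
      refine ⟨z, ⟨hzEk, mem_closedBall.mpr hj.le⟩, ?_⟩
      rw [mem_ball, h2ρ m]
      linarith
    · intro hbad
      simp only [Bad, Set.mem_iUnion, Set.mem_Ioi] at hbad
      obtain ⟨k', hk', y, hyE, hyb⟩ := hbad
      have : k' ≤ k := hkmax k' ⟨y, by rwa [mem_ball, dist_comm, ← mem_ball], hyE⟩
      omega
  -- good set property
  have hSprop : ∀ i, ∀ x ∈ S i, ypt i ∈ ball x ε ∧ sSup (u '' ball x ε) ≤ u (ypt i) + δ := by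
    rintro ⟨k, m, j⟩ x ⟨hx1, hx2⟩
    simp only [Set.mem_iUnion] at hx1
    obtain ⟨y', hy'T, hxy'⟩ := hx1
    have hTne : (T (k, m, j)).Nonempty := ⟨y', hy'T⟩
    have hyT := hypt _ hTne
    have hdist : dist x (ypt (k, m, j)) < ε := by
      have h1 : dist x y' < ε - 2 * ρ m := mem_ball.mp hxy'
      have h2 : dist y' (d j) ≤ ρ m := mem_closedBall.mp hy'T.2
      have h3 : dist (ypt (k, m, j)) (d j) ≤ ρ m := mem_closedBall.mp hyT.2
      calc dist x (ypt (k, m, j)) ≤ dist x y' + dist y' (ypt (k, m, j)) :=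
            dist_triangle _ _ _
        _ ≤ dist x y' + (dist y' (d j) + dist (d j) (ypt (k, m, j))) := by
            linarith [dist_triangle y' (d j) (ypt (k, m, j))]
        _ < ε := by rw [dist_comm (d j)]; linarith
    refine ⟨mem_ball'.mpr hdist, ?_⟩
    have hkq : (k : ℝ) * δ ≤ u (ypt (k, m, j)) := hyT.1.1
    refine csSup_le ⟨u x, ⟨x, mem_ball_self hε, rfl⟩⟩ ?_
    rintro v ⟨z, hz, rfl⟩
    have hk'le : ⌊u z / δ⌋ ≤ k := by
      by_contra h
      push_neg at h
      refine hx2 ?_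
      simp only [Bad, Set.mem_iUnion, Set.mem_Ioi]
      exact ⟨⌊u z / δ⌋, h, z, hmemEk z, by rwa [mem_ball, dist_comm, ← mem_ball]⟩
    have hz2 : u z < ((⌊u z / δ⌋ : ℝ) + 1) * δ := (hmemEk z).2
    have hcast : ((⌊u z / δ⌋ : ℤ) : ℝ) ≤ (k : ℝ) := by exact_mod_cast hk'le
    nlinarith
  -- assemble σ
  let e : (ℤ × ℕ × ℕ) ≃ ℕ := Denumerable.eqv (ℤ × ℕ × ℕ)
  have hcov : ∀ x : (EuclideanSpace ℝ (Fin N)), ∃ n : ℕ, x ∈ S (e.symm n) := by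
    intro x
    obtain ⟨i, hi⟩ := hcovι x
    exact ⟨e i, by simpa using hi⟩
  let c : (EuclideanSpace ℝ (Fin N)) → ℕ := fun x => Nat.find (hcov x)
  have hc : Measurable c := by
    apply measurable_to_countable'
    intro n
    have hset : c ⁻¹' {n} = S (e.symm n) ∩ ⋂ (m : ℕ) (_ : m < n), (S (e.symm m))ᶜ := by
      ext x
      simp only [Set.mem_preimage, Set.mem_singleton_iff, c, Nat.find_eq_iff,
        Set.mem_inter_iff, Set.mem_iInter, Set.mem_compl_iff]
    rw [hset]
    exact (hSmeas _).inter
      (MeasurableSet.iInter fun m => MeasurableSet.iInter fun _ => (hSmeas _).compl)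
  refine ⟨fun x => ypt (e.symm (c x)), (measurable_from_top (f := fun n => ypt (e.symm n))).comp hc, fun x => ?_⟩
  exact hSprop _ x (Nat.find_spec (hcov x))

/-- selection lemma. For a bounded Borel `u : X → ℝ` and `δ, ε > 0`
there exist Borel maps `σ_sup, σ_inf : Ω → X` selecting `δ`-optimal points in the
ball `B_ε(x)` for the supremum and infimum of `u`. -/
theorem selection_lemma {N : ℕ}
    (Ω : Set (EuclideanSpace ℝ (Fin N))) (hΩo : IsOpen Ω)
    (hΩb : Bornology.IsBounded Ω) (ε₀ : ℝ) (hε₀ : 0 < ε₀)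
    (Γ : Set (EuclideanSpace ℝ (Fin N)))
    (hΓ : Γ = {x | x ∉ Ω ∧ Metric.infDist x Ω < ε₀})
    (X : Set (EuclideanSpace ℝ (Fin N))) (hX : X = Ω ∪ Γ)
    (δ ε : ℝ) (hδ : 0 < δ) (hε : 0 < ε) (hεε₀ : ε < ε₀)
    (u : EuclideanSpace ℝ (Fin N) → ℝ) (hum : Measurable u)
    (hub : ∃ M, ∀ x, |u x| ≤ M) :
    ∃ σsup σinf : EuclideanSpace ℝ (Fin N) → EuclideanSpace ℝ (Fin N),
      Measurable σsup ∧ Measurable σinf ∧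
      (∀ x ∈ Ω, σsup x ∈ ball x ε ∩ X ∧ σinf x ∈ ball x ε ∩ X) ∧
      (∀ x ∈ Ω, sSup (u '' ball x ε) - δ ≤ u (σsup x)) ∧
      (∀ x ∈ Ω, u (σinf x) ≤ sInf (u '' ball x ε) + δ) := by
  obtain ⟨M, hub⟩ := hub
  obtain ⟨σsup, hm1, hp1⟩ := sup_select δ ε M hδ hε u hum hub
  obtain ⟨σinf, hm2, hp2⟩ := sup_select δ ε M hδ hε (fun z => -u z) hum.neg
    (fun x => by simpa [abs_neg] using hub x)
  have hballX : ∀ x ∈ Ω, ball x ε ⊆ X := by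
    intro x hx y hy
    rw [hX]
    by_cases hyΩ : y ∈ Ω
    · exact Or.inl hyΩ
    · refine Or.inr ?_
      rw [hΓ]
      exact ⟨hyΩ, lt_trans (lt_of_le_of_lt (Metric.infDist_le_dist_of_mem hx)
        (mem_ball.mp hy)) hεε₀⟩
  refine ⟨σsup, σinf, hm1, hm2,
    fun x hx => ⟨⟨(hp1 x).1, hballX x hx (hp1 x).1⟩, ⟨(hp2 x).1, hballX x hx (hp2 x).1⟩⟩,
    fun x hx => by linarith [(hp1 x).2], fun x hx => ?_⟩
  have h := (hp2 x).2
  have him : (fun z => -u z) '' ball x ε = -(u '' ball x ε) := by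
    rw [show (fun z => -u z) = (fun t => -t) ∘ u from rfl, Set.image_comp,
      Set.image_neg_eq_neg]
  rw [him] at h
  rw [Real.sInf_def]
  linarith
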